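/- The function τ : {u ∈ X : 0 < ‖u‖ ≤ ρ} → (0,1], defined by τ(u) := 1 if ψ(u) ≤ 0 and τ(u) := τ̄(u) (the unique zero in (0,1] of s ↦ ψ(s·u)) if ψ(u) ≥ 0, is well defined (the two prescriptions agree when ψ(u) = 0, since then τ̄(u) = 1) and continuous. -/

import Mathlib

open Set Filter Topology

section aux
variable {X : Type*} [NormedAddCommGroup X] [NormedSpace ℝ X] {ρ : ℝ} {ψ : X → ℝ}

lemma aux_hasDerivAt (hψ : ContDiff ℝ 1 ψ) (u : X) (s : ℝ) :
    HasDerivAt (fun t : ℝ => ψ (t • u)) (fderiv ℝ ψ (s • u) u) s := by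
  have h1 : HasDerivAt (fun t : ℝ => t • u) ((1:ℝ) • u) s :=
    (hasDerivAt_id s).smul_const u
  have h2 := (hψ.differentiable one_ne_zero (s • u)).hasFDerivAt
  simpa [Function.comp_def] using h2.comp_hasDerivAt s h1

lemma aux_deriv_pos (hρ : 0 < ρ)
    (H1 : ∀ v : X, 0 < ‖v‖ → ‖v‖ ≤ 2 * ρ → 0 ≤ ψ v → 0 < fderiv ℝ ψ v v)
    {u : X} (hu0 : 0 < ‖u‖) (huρ : ‖u‖ ≤ ρ) {s : ℝ} (hs0 : 0 < s) (hs1 : s ≤ 1)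
    (hpos : 0 ≤ ψ (s • u)) : 0 < fderiv ℝ ψ (s • u) u := by
  have hn : ‖s • u‖ = s * ‖u‖ := by
    rw [norm_smul, Real.norm_of_nonneg hs0.le]
  have h1 : 0 < ‖s • u‖ := by rw [hn]; positivity
  have h2 : ‖s • u‖ ≤ 2 * ρ := by rw [hn]; nlinarith
  have h3 := H1 (s • u) h1 h2 hpos
  rw [map_smul, smul_eq_mul] at h3
  nlinarith

lemma aux_nonneg_mono (hψ : ContDiff ℝ 1 ψ) (hρ : 0 < ρ)
    (H1 : ∀ v : X, 0 < ‖v‖ → ‖v‖ ≤ 2 * ρ → 0 ≤ ψ v → 0 < fderiv ℝ ψ v v)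
    {u : X} (hu0 : 0 < ‖u‖) (huρ : ‖u‖ ≤ ρ) {s0 s1 : ℝ}
    (h0 : 0 < s0) (h01 : s0 ≤ s1) (h1 : s1 ≤ 1) (hg : 0 ≤ ψ (s0 • u)) :
    0 ≤ ψ (s1 • u) := by
  by_contra hneg
  push_neg at hneg
  set g : ℝ → ℝ := fun t => ψ (t • u) with hgdef
  have hgc : Continuous g := hψ.continuous.comp (continuous_id.smul continuous_const)
  set A : Set ℝ := Icc s0 s1 ∩ {s | 0 ≤ g s} with hA
  have hAne : A.Nonempty := ⟨s0, ⟨le_refl _, h01⟩, hg⟩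
  have hAbdd : BddAbove A := ⟨s1, fun x hx => hx.1.2⟩
  have hAclosed : IsClosed A :=
    isClosed_Icc.inter (isClosed_Ici.preimage hgc)
  have hm : sSup A ∈ A := hAclosed.csSup_mem hAne hAbdd
  set m := sSup A with hmdef
  have hms1 : m < s1 := by
    rcases lt_or_eq_of_le hm.1.2 with h | h
    · exact h
    · exact absurd (h ▸ hm.2) (not_le.2 hneg)
  have hm0 : 0 < m := lt_of_lt_of_le h0 hm.1.1
  have hd : 0 < fderiv ℝ ψ (m • u) u :=
    aux_deriv_pos hρ H1 hu0 huρ hm0 (le_trans hm.1.2 h1) hm.2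
  have hder : HasDerivAt g (fderiv ℝ ψ (m • u) u) m := aux_hasDerivAt hψ u m
  rw [hasDerivAt_iff_tendsto_slope] at hder
  have hslope : ∀ᶠ x in 𝓝[≠] m, 0 < slope g m x :=
    hder.eventually (eventually_gt_nhds hd)
  have hslope' : ∀ᶠ x in 𝓝[>] m, 0 < slope g m x :=
    hslope.filter_mono (nhdsWithin_mono m fun x hx => ne_of_gt hx)
  have hlt : ∀ᶠ x in 𝓝[>] (m:ℝ), x < s1 :=
    eventually_nhdsWithin_of_eventually_nhds (Filter.Tendsto.eventually_lt_const hms1 tendsto_id)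
  have hmem : ∀ᶠ x in 𝓝[>] (m:ℝ), m < x := eventually_mem_nhdsWithin
  obtain ⟨x, hx1, hx2, hx3⟩ := (hslope'.and (hlt.and hmem)).exists
  rw [slope_def_field] at hx1
  have hxm : 0 < x - m := sub_pos.2 hx3
  have hgx : 0 < g x - g m := by
    rcases div_pos_iff.mp hx1 with ⟨h, _⟩ | ⟨_, h⟩
    · exact h
    · linarith
  have hm2 : 0 ≤ g m := hm.2
  have hxA : x ∈ A := ⟨⟨le_of_lt (lt_of_le_of_lt hm.1.1 hx3), hx2.le⟩,
    show (0:ℝ) ≤ g x by linarith⟩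
  have := le_csSup hAbdd hxA
  linarith

lemma aux_pos_strict (hψ : ContDiff ℝ 1 ψ) (hρ : 0 < ρ)
    (H1 : ∀ v : X, 0 < ‖v‖ → ‖v‖ ≤ 2 * ρ → 0 ≤ ψ v → 0 < fderiv ℝ ψ v v)
    {u : X} (hu0 : 0 < ‖u‖) (huρ : ‖u‖ ≤ ρ) {s0 s1 : ℝ}
    (h0 : 0 < s0) (h01 : s0 < s1) (h1 : s1 ≤ 1) (hg : 0 ≤ ψ (s0 • u)) :
    0 < ψ (s1 • u) := by
  have hnn : 0 ≤ ψ (s1 • u) := aux_nonneg_mono hψ hρ H1 hu0 huρ h0 h01.le h1 hg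
  rcases hnn.lt_or_eq with h | h
  · exact h
  exfalso
  set g : ℝ → ℝ := fun t => ψ (t • u) with hgdef
  have hd : 0 < fderiv ℝ ψ (s1 • u) u :=
    aux_deriv_pos hρ H1 hu0 huρ (h0.trans h01) h1 h.le
  have hder : HasDerivAt g (fderiv ℝ ψ (s1 • u) u) s1 := aux_hasDerivAt hψ u s1
  rw [hasDerivAt_iff_tendsto_slope] at hder
  have hslope : ∀ᶠ x in 𝓝[≠] s1, 0 < slope g s1 x :=
    hder.eventually (eventually_gt_nhds hd)
  have hslope' : ∀ᶠ x in 𝓝[<] s1, 0 < slope g s1 x :=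
    hslope.filter_mono (nhdsWithin_mono s1 fun x hx => ne_of_lt hx)
  have hgt : ∀ᶠ x in 𝓝[<] (s1:ℝ), s0 < x :=
    eventually_nhdsWithin_of_eventually_nhds (Filter.Tendsto.eventually_const_lt h01 tendsto_id)
  have hmem : ∀ᶠ x in 𝓝[<] (s1:ℝ), x < s1 := eventually_mem_nhdsWithin
  obtain ⟨x, hx1, hx2, hx3⟩ := (hslope'.and (hgt.and hmem)).exists
  rw [slope_def_field] at hx1
  have hxm : x - s1 < 0 := sub_neg.2 hx3
  have hgs1 : g s1 = 0 := h.symm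
  have hgx : 0 ≤ g x := aux_nonneg_mono hψ hρ H1 hu0 huρ h0 hx2.le (hx3.le.trans h1) hg
  have hnum : g x - g s1 < 0 := by
    rcases div_pos_iff.mp hx1 with ⟨_, h'⟩ | ⟨h', _⟩
    · linarith
    · exact h'
  linarith

lemma aux_unique (hψ : ContDiff ℝ 1 ψ) (hρ : 0 < ρ)
    (H1 : ∀ v : X, 0 < ‖v‖ → ‖v‖ ≤ 2 * ρ → 0 ≤ ψ v → 0 < fderiv ℝ ψ v v)
    {u : X} (hu0 : 0 < ‖u‖) (huρ : ‖u‖ ≤ ρ) {s t : ℝ}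
    (hs : s ∈ Ioc (0:ℝ) 1) (ht : t ∈ Ioc (0:ℝ) 1)
    (hgs : ψ (s • u) = 0) (hgt : ψ (t • u) = 0) : s = t := by
  by_contra hne
  rcases lt_or_gt_of_ne hne with h | h
  · have := aux_pos_strict hψ hρ H1 hu0 huρ hs.1 h ht.2 hgs.ge
    linarith
  · have := aux_pos_strict hψ hρ H1 hu0 huρ ht.1 h hs.2 hgt.ge
    linarith

lemma aux_exists (hψ : ContDiff ℝ 1 ψ)
    (H2 : ∀ u : X, u ≠ 0 → ∀ᶠ τ in 𝓝[>] (0:ℝ), ψ (τ • u) < 0)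
    {u : X} (hu0 : 0 < ‖u‖) (hpos : 0 ≤ ψ u) :
    ∃ s, s ∈ Ioc (0:ℝ) 1 ∧ ψ (s • u) = 0 := by
  have hune : u ≠ 0 := norm_pos_iff.mp hu0
  have h2 := H2 u hune
  have h3 : ∀ᶠ τ in 𝓝[>] (0:ℝ), τ < 1 :=
    eventually_nhdsWithin_of_eventually_nhds
      (Filter.Tendsto.eventually_lt_const one_pos tendsto_id)
  have h4 : ∀ᶠ τ in 𝓝[>] (0:ℝ), 0 < τ := eventually_mem_nhdsWithin
  obtain ⟨τ0, hτneg, hτ1, hτ0⟩ := (h2.and (h3.and h4)).exists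
  have hgc : ContinuousOn (fun t : ℝ => ψ (t • u)) (Icc τ0 1) :=
    (hψ.continuous.comp (continuous_id.smul continuous_const)).continuousOn
  have hmem : (0:ℝ) ∈ Icc (ψ (τ0 • u)) (ψ ((1:ℝ) • u)) :=
    ⟨hτneg.le, by rw [one_smul]; exact hpos⟩
  obtain ⟨s, hsmem, hs⟩ := intermediate_value_Icc hτ1.le hgc hmem
  exact ⟨s, ⟨lt_of_lt_of_le hτ0 hsmem.1, hsmem.2⟩, hs⟩
end aux


/-- Well-definedness and continuity of the radial rescaling function `τ(u)` from the
proof of Lemma 5: `τ(u) = 1` when `ψ(u) ≤ 0`, `τ(u)` is the unique zero in `(0,1]` of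
`s ↦ ψ(su)` when `ψ(u) ≥ 0`, and `τ` is continuous on `{u : 0 < ‖u‖ ≤ ρ}`. -/
theorem stmt_9 {X : Type*} [NormedAddCommGroup X] [NormedSpace ℝ X]
    (ρ : ℝ) (hρ : 0 < ρ) (ψ : X → ℝ) (hψ : ContDiff ℝ 1 ψ) (hψ0 : ψ 0 = 0)
    (H1 : ∀ v : X, 0 < ‖v‖ → ‖v‖ ≤ 2 * ρ → 0 ≤ ψ v → 0 < fderiv ℝ ψ v v)
    (H2 : ∀ u : X, u ≠ 0 → ∀ᶠ τ in nhdsWithin (0:ℝ) (Set.Ioi 0), ψ (τ • u) < 0) :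
    ∃ tau : X → ℝ,
      ContinuousOn tau {u : X | 0 < ‖u‖ ∧ ‖u‖ ≤ ρ} ∧
      ∀ u : X, 0 < ‖u‖ → ‖u‖ ≤ ρ →
        tau u ∈ Set.Ioc (0:ℝ) 1 ∧
        (ψ u ≤ 0 → tau u = 1) ∧
        (0 ≤ ψ u → ψ (tau u • u) = 0 ∧
          ∀ s ∈ Set.Ioc (0:ℝ) 1, ψ (s • u) = 0 → s = tau u) := by
  classical
  set S : Set X := {u : X | 0 < ‖u‖ ∧ ‖u‖ ≤ ρ} with hS
  set tau : X → ℝ := fun u =>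
    if h : 0 < ‖u‖ ∧ ‖u‖ ≤ ρ ∧ 0 ≤ ψ u then
      (aux_exists hψ H2 h.1 h.2.2).choose
    else 1 with htaudef
  -- basic facts
  have htau_spec : ∀ u : X, 0 < ‖u‖ → ‖u‖ ≤ ρ → 0 ≤ ψ u →
      tau u ∈ Ioc (0:ℝ) 1 ∧ ψ (tau u • u) = 0 := by
    intro u h1 h2 h3
    have hcond : 0 < ‖u‖ ∧ ‖u‖ ≤ ρ ∧ 0 ≤ ψ u := ⟨h1, h2, h3⟩
    have : tau u = (aux_exists hψ H2 hcond.1 hcond.2.2).choose := dif_pos hcond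
    rw [this]
    exact (aux_exists hψ H2 hcond.1 hcond.2.2).choose_spec
  have htau_mem : ∀ u : X, 0 < ‖u‖ → ‖u‖ ≤ ρ → tau u ∈ Ioc (0:ℝ) 1 := by
    intro u h1 h2
    by_cases h3 : 0 ≤ ψ u
    · exact (htau_spec u h1 h2 h3).1
    · have : tau u = 1 := dif_neg (by tauto)
      rw [this]; exact ⟨one_pos, le_refl 1⟩
  have htau_one : ∀ u : X, 0 < ‖u‖ → ‖u‖ ≤ ρ → ψ u ≤ 0 → tau u = 1 := by
    intro u h1 h2 h3
    by_cases h4 : 0 ≤ ψ u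
    · have heq : ψ u = 0 := le_antisymm h3 h4
      obtain ⟨hmem, hzero⟩ := htau_spec u h1 h2 h4
      exact aux_unique hψ hρ H1 h1 h2 hmem ⟨one_pos, le_refl 1⟩ hzero
        (by rw [one_smul]; exact heq)
    · exact dif_neg (by tauto)
  -- negativity before tau, positivity after
  have htau_neg : ∀ u : X, 0 < ‖u‖ → ‖u‖ ≤ ρ → 0 ≤ ψ u →
      ∀ s : ℝ, 0 < s → s < tau u → ψ (s • u) < 0 := by
    intro u h1 h2 h3 s hs0 hs1
    obtain ⟨hmem, hzero⟩ := htau_spec u h1 h2 h3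
    by_contra hc
    push_neg at hc
    have := aux_pos_strict hψ hρ H1 h1 h2 hs0 hs1 hmem.2 hc
    rw [hzero] at this
    exact lt_irrefl 0 this
  have htau_pos : ∀ u : X, 0 < ‖u‖ → ‖u‖ ≤ ρ → 0 ≤ ψ u →
      ∀ s : ℝ, tau u < s → s ≤ 1 → 0 < ψ (s • u) := by
    intro u h1 h2 h3 s hs1 hs2
    obtain ⟨hmem, hzero⟩ := htau_spec u h1 h2 h3
    exact aux_pos_strict hψ hρ H1 h1 h2 hmem.1 hs1 hs2 hzero.ge
  refine ⟨tau, ?_, ?_⟩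
  · -- continuity
    intro u0 hu0S
    obtain ⟨hu0n, hu0ρ⟩ := hu0S
    have hmemS : ∀ᶠ u in 𝓝[S] u0, u ∈ S := eventually_mem_nhdsWithin
    rcases lt_or_ge (ψ u0) 0 with hneg | hpos
    · -- locally tau = 1
      have hev : ∀ᶠ u in 𝓝 u0, ψ u < 0 :=
        (hψ.continuous.tendsto u0).eventually (Filter.Tendsto.eventually_lt_const hneg tendsto_id)
      have hev' : tau =ᶠ[𝓝[S] u0] fun _ => (1:ℝ) := by
        filter_upwards [hev.filter_mono nhdsWithin_le_nhds] with u hu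
        exact dif_neg (by intro h; linarith [h.2.2])
      have h0 : tau u0 = 1 := dif_neg (by intro h; linarith [h.2.2])
      exact (continuousWithinAt_const (b := (1:ℝ))).congr_of_eventuallyEq hev' h0
    · -- ψ u0 ≥ 0
      obtain ⟨hmem0, hzero0⟩ := htau_spec u0 hu0n hu0ρ hpos
      rw [ContinuousWithinAt]
      rw [tendsto_order]
      constructor
      · -- lower bound
        intro a ha
        rcases le_or_gt a 0 with ha0 | ha0
        · filter_upwards [hmemS] with u hu
          exact lt_of_le_of_lt ha0 (htau_mem u hu.1 hu.2).1
        · have hga : ψ (a • u0) < 0 := htau_neg u0 hu0n hu0ρ hpos a ha0 ha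
          have hcont : Continuous fun u : X => ψ (a • u) :=
            hψ.continuous.comp (continuous_const.smul continuous_id)
          have hev : ∀ᶠ u in 𝓝 u0, ψ (a • u) < 0 :=
            (hcont.tendsto u0).eventually (Filter.Tendsto.eventually_lt_const hga tendsto_id)
          filter_upwards [hev.filter_mono nhdsWithin_le_nhds, hmemS] with u hu huS
          have ha1 : a < 1 := lt_of_lt_of_le ha hmem0.2
          by_cases hψu : 0 ≤ ψ u
          · by_contra hc
            push_neg at hc
            rcases lt_or_eq_of_le hc with h | h
            · have := htau_pos u huS.1 huS.2 hψu a h ha1.le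
              linarith
            · have := (htau_spec u huS.1 huS.2 hψu).2
              rw [h] at this
              linarith
          · have : tau u = 1 := htau_one u huS.1 huS.2 (by linarith)
            rw [this]; exact ha1
      · -- upper bound
        intro b hb
        rcases lt_or_ge 1 b with hb1 | hb1
        · filter_upwards [hmemS] with u hu
          exact lt_of_le_of_lt (htau_mem u hu.1 hu.2).2 hb1
        · have hτlt1 : tau u0 < 1 := lt_of_lt_of_le hb hb1
          have hψu0pos : 0 < ψ u0 := by
            have := htau_pos u0 hu0n hu0ρ hpos 1 hτlt1 le_rfl
            rwa [one_smul] at this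
          have hgb : 0 < ψ (b • u0) := htau_pos u0 hu0n hu0ρ hpos b hb hb1
          have hcontb : Continuous fun u : X => ψ (b • u) :=
            hψ.continuous.comp (continuous_const.smul continuous_id)
          have hev1 : ∀ᶠ u in 𝓝 u0, 0 < ψ (b • u) :=
            (hcontb.tendsto u0).eventually (Filter.Tendsto.eventually_const_lt hgb tendsto_id)
          have hev2 : ∀ᶠ u in 𝓝 u0, 0 < ψ u :=
            ((hψ.continuous.tendsto u0)).eventually (Filter.Tendsto.eventually_const_lt hψu0pos tendsto_id)
          filter_upwards [hev1.filter_mono nhdsWithin_le_nhds,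
            hev2.filter_mono nhdsWithin_le_nhds, hmemS] with u hu1 hu2 huS
          by_contra hc
          push_neg at hc
          rcases lt_or_eq_of_le hc with h | h
          · have := htau_neg u huS.1 huS.2 hu2.le b (hmem0.1.trans hb) h
            linarith
          · have := (htau_spec u huS.1 huS.2 hu2.le).2
            rw [← h] at this
            linarith
  · -- pointwise properties
    intro u h1 h2
    refine ⟨htau_mem u h1 h2, htau_one u h1 h2, fun h3 => ?_⟩
    obtain ⟨hmem, hzero⟩ := htau_spec u h1 h2 h3
    exact ⟨hzero, fun s hs hszero =>
      aux_unique hψ hρ H1 h1 h2 hs hmem hszero hzero⟩
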